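/- Let q_A, q_B > 0 with q_A + q_B = 1, and let R_A, R_B > 0 satisfy q_A R_A + q_B R_B > 1. Then the quantity Θ^* = (1/2)·( 1 − 1/R_A − 1/R_B + sqrt( q_A (1 − 1/R_A + 1/R_B)^2 + q_B (1 − 1/R_B + 1/R_A)^2 ) ) lies in (0,1) and satisfies the implicit endemic equation q_A R_A/(1+R_A Θ^*) + q_B R_B/(1+R_B Θ^*) = 1. -/

import Mathlib

/-- Explicit endemic prevalence for the two-class SIS coinfection model:
the explicit `Θ*` lies in `(0,1)` and solves the implicit endemic equation. -/
theorem two_class_explicit_theta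
    (qA qB RA RB : ℝ) (hqA : 0 < qA) (hqB : 0 < qB) (hq : qA + qB = 1)
    (hRA : 0 < RA) (hRB : 0 < RB)
    (hR0 : 1 < qA * RA + qB * RB)
    (Θ : ℝ)
    (hΘ : Θ = (1/2) * (1 - 1/RA - 1/RB +
      Real.sqrt (qA * (1 - 1/RA + 1/RB)^2 + qB * (1 - 1/RB + 1/RA)^2))) :
    Θ ∈ Set.Ioo (0:ℝ) 1 ∧
    qA * RA / (1 + RA * Θ) + qB * RB / (1 + RB * Θ) = 1 := by
  have hRA' : RA ≠ 0 := ne_of_gt hRA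
  have hRB' : RB ≠ 0 := ne_of_gt hRB
  set a : ℝ := 1/RA with ha_def
  set b : ℝ := 1/RB with hb_def
  have ha : 0 < a := by positivity
  have hb : 0 < b := by positivity
  have haRA : RA * a = 1 := by rw [ha_def, mul_one_div_cancel hRA']
  have hbRB : RB * b = 1 := by rw [hb_def, mul_one_div_cancel hRB']
  set D : ℝ := qA * (1 - a + b)^2 + qB * (1 - b + a)^2 with hD_def
  have hD0 : 0 ≤ D :=
    add_nonneg (mul_nonneg hqA.le (sq_nonneg _)) (mul_nonneg hqB.le (sq_nonneg _))
  set S : ℝ := Real.sqrt D with hS_def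
  have hS2 : S^2 = D := Real.sq_sqrt hD0
  have hS0 : 0 ≤ S := Real.sqrt_nonneg D
  -- discriminant strictly above (1-a-b)^2
  have hRsub : 0 < qA * RA + qB * RB - 1 := by linarith
  have hDgt : (1 - a - b)^2 < D := by
    nlinarith [mul_pos (mul_pos ha hb) hRsub, mul_pos hqA hb, mul_pos hqB ha,
      mul_pos (mul_pos hqA hb) (mul_pos ha hRA), mul_pos (mul_pos hqB ha) (mul_pos hb hRB)]
  -- discriminant strictly below (1+a+b)^2
  have hDlt : D < (1 + a + b)^2 := by
    nlinarith [mul_pos hqA ha, mul_pos hqB hb, mul_pos (mul_pos hqA ha) hb,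
      mul_pos (mul_pos hqB hb) ha]
  -- bounds on S
  have hSlt : S < 1 + a + b := by
    rw [hS_def]
    exact (Real.sqrt_lt' (by linarith)).mpr (by nlinarith)
  have hSgt : -(1 - a - b) < S := by
    rcases le_or_gt (-(1 - a - b)) 0 with h | h
    · have : 0 < S := by
        rw [hS_def]
        exact Real.sqrt_pos.mpr (lt_of_le_of_lt (sq_nonneg _) hDgt)
      linarith
    · rw [hS_def]
      refine (Real.lt_sqrt h.le).mpr ?_
      nlinarith
  have hΘ2 : 2 * Θ = (1 - a - b) + S := by rw [hΘ]; ring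
  have hΘpos : 0 < Θ := by linarith
  have hΘlt : Θ < 1 := by linarith
  refine ⟨⟨hΘpos, hΘlt⟩, ?_⟩
  -- quadratic satisfied by Θ
  have hq2 : (2*Θ - (1 - a - b))^2 = D := by
    rw [show 2*Θ - (1 - a - b) = S by linarith, hS2]
  have hquad : Θ^2 + (a + b - 1) * Θ + (a*b - qA*b - qB*a) = 0 := by
    rw [hD_def] at hq2
    linear_combination hq2/4 + ((1+a^2+b^2-2*a*b)/4 - (a+b)/2) * hq
  have hquadR : RA*RB*Θ^2 + (RA+RB-RA*RB)*Θ + (1 - qA*RA - qB*RB) = 0 := by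
    linear_combination RA*RB*hquad + (-RB*Θ - RB*b + qB*RB)*haRA + (-RA*Θ - 1 + qA*RA)*hbRB
  have h1 : (0:ℝ) < 1 + RA * Θ := by positivity
  have h2 : (0:ℝ) < 1 + RB * Θ := by positivity
  rw [div_add_div _ _ (ne_of_gt h1) (ne_of_gt h2), div_eq_one_iff_eq (by positivity)]
  linear_combination (-1)*hquadR + (RA*RB*Θ)*hq
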